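/- For any probability vector p on D, writing d(p) = H(τ_*p)/log m + (H(p) − H(τ_*p))/log n with 1 < m < n, we have d(p) ≤ log(Σ_j t_j^{log m/log n})/log m, with equality for p_{i,j} = t_j^{β−1}/Σ_k t_k^β where β = log m/log n. -/

import Mathlib

open Finset

lemma gibbs {ι : Type*} (s : Finset ι) (w a : ι → ℝ)
    (hw : ∀ i ∈ s, 0 ≤ w i) (ha : ∀ i ∈ s, 0 < a i) :
    ∑ i ∈ s, w i * Real.log (a i / w i) ≤
      (∑ i ∈ s, w i) * Real.log ((∑ i ∈ s, a i) / (∑ i ∈ s, w i)) := by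
  rcases eq_or_lt_of_le (Finset.sum_nonneg hw) with h0 | hWpos
  · have hz : ∀ i ∈ s, w i = 0 := by
      intro i hi
      exact (Finset.sum_eq_zero_iff_of_nonneg hw).1 h0.symm i hi
    have hL : ∑ i ∈ s, w i * Real.log (a i / w i) = 0 :=
      Finset.sum_eq_zero (fun i hi => by rw [hz i hi]; ring)
    rw [← h0, hL]
    simp
  · set W := ∑ i ∈ s, w i with hW
    set A := ∑ i ∈ s, a i with hA
    have hne : s.Nonempty := by
      by_contra h
      rw [Finset.not_nonempty_iff_eq_empty] at h
      simp [hW, h] at hWpos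
    have hApos : 0 < A := Finset.sum_pos ha hne
    have key : ∀ i ∈ s, w i * Real.log (a i / w i) ≤
        a i * (W / A) - w i + w i * Real.log (A / W) := by
      intro i hi
      have hai := ha i hi
      rcases eq_or_lt_of_le (hw i hi) with h0 | hpos
      · rw [← h0]
        have h1 : (0:ℝ) ≤ a i * (W / A) := by positivity
        simpa using h1
      · have hx : 0 < a i * W / (w i * A) := by positivity
        have hlog := Real.log_le_sub_one_of_pos hx
        have heq : Real.log (a i * W / (w i * A)) =
            Real.log (a i / w i) - Real.log (A / W) := by
          rw [Real.log_div (by positivity) (by positivity),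
              Real.log_div hai.ne' hpos.ne',
              Real.log_div hApos.ne' hWpos.ne',
              Real.log_mul hai.ne' hWpos.ne',
              Real.log_mul hpos.ne' hApos.ne']
          ring
        rw [heq] at hlog
        have h1 := mul_le_mul_of_nonneg_left hlog (le_of_lt hpos)
        have h2 : w i * (a i * W / (w i * A) - 1) = a i * (W / A) - w i := by
          field_simp
        rw [h2] at h1
        linarith
    calc ∑ i ∈ s, w i * Real.log (a i / w i)
        ≤ ∑ i ∈ s, (a i * (W / A) - w i + w i * Real.log (A / W)) :=
          Finset.sum_le_sum key
      _ = A * (W / A) - W + W * Real.log (A / W) := by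
          rw [Finset.sum_add_distrib, Finset.sum_sub_distrib, ← Finset.sum_mul,
            ← Finset.sum_mul]
      _ = W * Real.log (A / W) := by field_simp; ring

lemma entropy_le {ι : Type*} (s : Finset ι) (w : ι → ℝ) (hw : ∀ i ∈ s, 0 ≤ w i) :
    -∑ i ∈ s, w i * Real.log (w i) ≤
      (∑ i ∈ s, w i) * Real.log (s.card : ℝ)
        - (∑ i ∈ s, w i) * Real.log (∑ i ∈ s, w i) := by
  have h := gibbs s w (fun _ => 1) hw (fun i _ => one_pos)
  simp only [Finset.sum_const, nsmul_eq_mul, mul_one] at h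
  have hL : ∑ i ∈ s, w i * Real.log (1 / w i) = -∑ i ∈ s, w i * Real.log (w i) := by
    rw [← Finset.sum_neg_distrib]
    refine Finset.sum_congr rfl (fun i _ => ?_)
    rw [one_div, Real.log_inv]
    ring
  rw [hL] at h
  rcases eq_or_lt_of_le (Finset.sum_nonneg hw) with h0 | hWpos
  · rw [← h0] at h ⊢
    simpa using h
  · have hne : s.Nonempty := by
      by_contra hc
      rw [Finset.not_nonempty_iff_eq_empty] at hc
      simp [hc] at hWpos
    have hN : (0:ℝ) < (s.card : ℝ) := by
      exact_mod_cast Finset.card_pos.2 hne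
    rw [Real.log_div hN.ne' hWpos.ne', mul_sub] at h
    exact h

/-- For any probability vector `p` on the digit set `D`, with `1 < m < n`,
`β = log m / log n`, `q = τ_*p` the row marginal and `t_j` the row counts,
`d(p) = H(q)/log m + (H(p) − H(q))/log n ≤ log (∑_{j : t_j ≥ 1} t_j^β)/log m`,
with equality for `p_{i,j} = t_j^{β−1} / ∑_k t_k^β`. -/
theorem stmt19 (n m : ℕ) (hm : 1 < m) (hmn : m < n)
    (D : Finset (Fin n × Fin m)) (hD : D.Nonempty)
    (t : Fin m → ℕ) (ht : ∀ j, t j = (D.filter (fun d => d.2 = j)).card)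
    (β : ℝ) (hβ : β = Real.log m / Real.log n)
    (S : ℝ) (hS : S = ∑ j ∈ univ.filter (fun j => 1 ≤ t j), (t j : ℝ) ^ β)
    (dimOf : (Fin n × Fin m → ℝ) → ℝ)
    (hdim : ∀ p, dimOf p =
      (-∑ j, (∑ d ∈ D.filter (fun d => d.2 = j), p d)
          * Real.log (∑ d ∈ D.filter (fun d => d.2 = j), p d)) / Real.log m
      + ((-∑ d ∈ D, p d * Real.log (p d))
          - (-∑ j, (∑ d ∈ D.filter (fun d => d.2 = j), p d)
              * Real.log (∑ d ∈ D.filter (fun d => d.2 = j), p d))) / Real.log n) :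
    (∀ p : Fin n × Fin m → ℝ,
        (∀ d, 0 ≤ p d) → (∀ d, d ∉ D → p d = 0) → (∑ d ∈ D, p d = 1) →
        dimOf p ≤ Real.log S / Real.log m) ∧
    dimOf (fun d => if d ∈ D then (t d.2 : ℝ) ^ (β - 1) / S else 0)
      = Real.log S / Real.log m := by
  have hm0 : (1:ℝ) < (m:ℝ) := by exact_mod_cast hm
  have hn0 : (1:ℝ) < (n:ℝ) := by exact_mod_cast hm.trans hmn
  have hlogm : 0 < Real.log m := Real.log_pos hm0
  have hlogn : 0 < Real.log n := Real.log_pos hn0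
  have hβpos : 0 < β := by rw [hβ]; positivity
  have hβlt : β < 1 := by
    rw [hβ, div_lt_one hlogn]
    exact Real.log_lt_log (by linarith) (by exact_mod_cast hmn)
  have hSpos : 0 < S := by
    obtain ⟨d, hd⟩ := hD
    have htd : 1 ≤ t d.2 := by
      rw [ht]; exact Finset.card_pos.2 ⟨d, Finset.mem_filter.2 ⟨hd, rfl⟩⟩
    rw [hS]
    apply Finset.sum_pos
    · intro j hj
      have h1 : 1 ≤ t j := (Finset.mem_filter.1 hj).2
      have h2 : (0:ℝ) < t j := by exact_mod_cast h1
      positivity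
    · exact ⟨d.2, Finset.mem_filter.2 ⟨Finset.mem_univ _, htd⟩⟩
  have keyalg : ∀ A B : ℝ, A / Real.log m + (B - A) / Real.log n
      = (β * B + (1 - β) * A) / Real.log m := by
    intro A B
    rw [hβ]
    field_simp
    ring
  constructor
  · -- inequality
    intro p hp0 hpD hp1
    rw [hdim p, keyalg]
    set q : Fin m → ℝ := fun j => ∑ d ∈ D.filter (fun d => d.2 = j), p d with hq
    have hq0 : ∀ j, 0 ≤ q j := fun j => Finset.sum_nonneg (fun d _ => hp0 d)
    have hq1 : ∑ j, q j = 1 := by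
      rw [hq]
      rw [Finset.sum_fiberwise_of_maps_to (fun d _ => Finset.mem_univ d.2)]
      exact hp1
    have hsplit : ∑ d ∈ D, p d * Real.log (p d)
        = ∑ j, ∑ d ∈ D.filter (fun d => d.2 = j), p d * Real.log (p d) :=
      (Finset.sum_fiberwise_of_maps_to (fun d _ => Finset.mem_univ d.2) _).symm
    have hA : ∀ j, -∑ d ∈ D.filter (fun d => d.2 = j), p d * Real.log (p d)
        ≤ q j * Real.log ((t j : ℝ)) - q j * Real.log (q j) := by
      intro j
      have h := entropy_le (D.filter (fun d => d.2 = j)) p (fun d _ => hp0 d)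
      rw [← ht j] at h
      exact h
    have step1 : β * (-∑ d ∈ D, p d * Real.log (p d))
          + (1 - β) * (-∑ j, q j * Real.log (q j))
        ≤ ∑ j, (β * (q j * Real.log ((t j : ℝ))) - q j * Real.log (q j)) := by
      rw [hsplit, ← Finset.sum_neg_distrib, ← Finset.sum_neg_distrib,
        Finset.mul_sum, Finset.mul_sum, ← Finset.sum_add_distrib]
      refine Finset.sum_le_sum (fun j _ => ?_)
      nlinarith [mul_le_mul_of_nonneg_left (hA j) hβpos.le]
    have step2 : ∑ j, (β * (q j * Real.log ((t j : ℝ))) - q j * Real.log (q j))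
        ≤ Real.log S := by
      set F := univ.filter (fun j => 1 ≤ t j) with hF
      have hvanish : ∀ j ∈ univ, j ∉ F →
          (β * (q j * Real.log ((t j : ℝ))) - q j * Real.log (q j)) = 0 := by
        intro j _ hj
        have ht0 : t j = 0 := by
          simp only [hF, Finset.mem_filter, Finset.mem_univ, true_and] at hj
          omega
        have hempty : D.filter (fun d => d.2 = j) = ∅ := by
          rw [← Finset.card_eq_zero, ← ht j]; exact ht0
        have hq0' : q j = 0 := by rw [hq]; simp [hempty]
        rw [hq0', ht0]; simp
      have hrestrict : ∑ j, (β * (q j * Real.log ((t j : ℝ))) - q j * Real.log (q j))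
          = ∑ j ∈ F, (β * (q j * Real.log ((t j : ℝ))) - q j * Real.log (q j)) :=
        (Finset.sum_subset (Finset.subset_univ F) hvanish).symm
      have hqF : ∑ j ∈ F, q j = 1 := by
        rw [← hq1]
        refine Finset.sum_subset (Finset.subset_univ F) ?_
        intro j _ hj
        have ht0 : t j = 0 := by
          simp only [hF, Finset.mem_filter, Finset.mem_univ, true_and] at hj
          omega
        have hempty : D.filter (fun d => d.2 = j) = ∅ := by
          rw [← Finset.card_eq_zero, ← ht j]; exact ht0
        rw [hq]; simp [hempty]
      have htpos : ∀ j ∈ F, (0:ℝ) < (t j : ℝ) := by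
        intro j hj
        have h1 : 1 ≤ t j := (Finset.mem_filter.1 hj).2
        exact_mod_cast h1
      have hg := gibbs F q (fun j => (t j : ℝ) ^ β) (fun j _ => hq0 j)
        (fun j hj => Real.rpow_pos_of_pos (htpos j hj) β)
      rw [hqF, ← hS, div_one, one_mul] at hg
      rw [hrestrict]
      refine le_trans (le_of_eq ?_) hg
      refine Finset.sum_congr rfl (fun j hj => ?_)
      rcases eq_or_lt_of_le (hq0 j) with h0 | hqpos
      · rw [← h0]; simp
      · rw [Real.log_div (Real.rpow_pos_of_pos (htpos j hj) β).ne' hqpos.ne',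
          Real.log_rpow (htpos j hj)]
        ring
    have hnum := step1.trans step2
    exact (div_le_div_iff_of_pos_right hlogm).mpr hnum
  · -- equality
    set phat : Fin n × Fin m → ℝ :=
      fun d => if d ∈ D then (t d.2 : ℝ) ^ (β - 1) / S else 0 with hphat
    rw [hdim, keyalg]
    have hmul : ∀ j, (t j : ℝ) * (t j : ℝ) ^ (β - 1) = (t j : ℝ) ^ β := by
      intro j
      rcases Nat.eq_zero_or_pos (t j) with h0 | hpos
      · rw [h0]
        simp [Real.zero_rpow hβpos.ne']
      · have htp : (0:ℝ) < (t j : ℝ) := by exact_mod_cast hpos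
        have h := Real.rpow_add htp 1 (β - 1)
        rw [Real.rpow_one] at h
        rw [← h]
        norm_num
    have hqhat : ∀ j, (∑ d ∈ D.filter (fun d => d.2 = j), phat d) = (t j : ℝ) ^ β / S := by
      intro j
      have h1 : ∀ d ∈ D.filter (fun d => d.2 = j), phat d = (t j : ℝ) ^ (β - 1) / S := by
        intro d hd
        obtain ⟨hdD, hdj⟩ := Finset.mem_filter.1 hd
        rw [hphat]
        simp only [hdD, if_true, hdj]
      rw [Finset.sum_congr rfl h1, Finset.sum_const, ← ht j, nsmul_eq_mul,
        mul_div_assoc' _ _ S, hmul j]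
    have hinner : ∀ j, ∑ d ∈ D.filter (fun d => d.2 = j), phat d * Real.log (phat d)
        = ((t j : ℝ) ^ β / S) * Real.log ((t j : ℝ) ^ (β - 1) / S) := by
      intro j
      have h1 : ∀ d ∈ D.filter (fun d => d.2 = j),
          phat d * Real.log (phat d)
            = ((t j : ℝ) ^ (β - 1) / S) * Real.log ((t j : ℝ) ^ (β - 1) / S) := by
        intro d hd
        obtain ⟨hdD, hdj⟩ := Finset.mem_filter.1 hd
        rw [hphat]
        simp only [hdD, if_true, hdj]
      rw [Finset.sum_congr rfl h1, Finset.sum_const, ← ht j, nsmul_eq_mul,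
        ← mul_assoc, mul_div_assoc' _ _ S, hmul j]
    have hsplit : ∑ d ∈ D, phat d * Real.log (phat d)
        = ∑ j, ∑ d ∈ D.filter (fun d => d.2 = j), phat d * Real.log (phat d) :=
      (Finset.sum_fiberwise_of_maps_to (fun d _ => Finset.mem_univ d.2) _).symm
    have hnum : β * (-∑ d ∈ D, phat d * Real.log (phat d))
          + (1 - β) * (-∑ j, (∑ d ∈ D.filter (fun d => d.2 = j), phat d)
              * Real.log (∑ d ∈ D.filter (fun d => d.2 = j), phat d))
        = Real.log S := by
      rw [hsplit]
      simp only [hinner, hqhat]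
      rw [← Finset.sum_neg_distrib, ← Finset.sum_neg_distrib,
        Finset.mul_sum, Finset.mul_sum, ← Finset.sum_add_distrib]
      set F := univ.filter (fun j => 1 ≤ t j) with hF
      have hvanish : ∀ j ∈ univ, j ∉ F →
          (β * -(((t j : ℝ) ^ β / S) * Real.log ((t j : ℝ) ^ (β - 1) / S))
            + (1 - β) * -(((t j : ℝ) ^ β / S) * Real.log ((t j : ℝ) ^ β / S))) = 0 := by
        intro j _ hj
        have ht0 : t j = 0 := by
          simp only [hF, Finset.mem_filter, Finset.mem_univ, true_and] at hj
          omega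
        rw [ht0]
        simp [Real.zero_rpow hβpos.ne']
      rw [Finset.sum_subset (Finset.subset_univ F) hvanish |>.symm]
      have hterm : ∀ j ∈ F,
          (β * -(((t j : ℝ) ^ β / S) * Real.log ((t j : ℝ) ^ (β - 1) / S))
            + (1 - β) * -(((t j : ℝ) ^ β / S) * Real.log ((t j : ℝ) ^ β / S)))
          = ((t j : ℝ) ^ β / S) * Real.log S := by
        intro j hj
        have h1 : 1 ≤ t j := (Finset.mem_filter.1 hj).2
        have htp : (0:ℝ) < (t j : ℝ) := by exact_mod_cast h1
        rw [Real.log_div (Real.rpow_pos_of_pos htp (β - 1)).ne' hSpos.ne',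
          Real.log_div (Real.rpow_pos_of_pos htp β).ne' hSpos.ne',
          Real.log_rpow htp, Real.log_rpow htp]
        ring
      rw [Finset.sum_congr rfl hterm, ← Finset.sum_mul, ← Finset.sum_div, ← hS,
        div_self hSpos.ne', one_mul]
    rw [hnum]
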